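/- Let k ≥ 5 be an odd natural number and let t be a real number with −((k−1)·2^(k−2))^(−1/(k−3)) < t < 0. Then the function f_t : ℝ² → ℝ defined by f_t(x,y) = x²y + 2t·x² + y^(k−1) − t·y has exactly one critical point, namely the point (0, y₀), where y₀ is the unique real number satisfying (k−1)·y₀^(k−2) = t (y₀ exists, is unique and is negative since k−2 is odd and t < 0). -/

import Mathlib

/-- For `k ≥ 5` odd and `-((k-1)*2^(k-2))^(-1/(k-3)) < t < 0`,
the morsification `f_t (x,y) = x^2*y + 2*t*x^2 + y^(k-1) - t*y` of the
`D_k^+` curve singularity has exactly one critical point `(0, y₀)`, where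
`y₀` is the unique real number with `(k-1)*y₀^(k-2) = t`; moreover `y₀` is
negative. -/
theorem stmt_8 (k : ℕ) (hk : 5 ≤ k) (hko : Odd k) (t : ℝ)
    (ht : -((((k : ℝ) - 1) * 2 ^ (k - 2)) ^ (-(1 / ((k : ℝ) - 3)))) < t)
    (ht0 : t < 0) :
    (∃! y₀ : ℝ, ((k : ℝ) - 1) * y₀ ^ (k - 2) = t) ∧
    ∀ y₀ : ℝ, ((k : ℝ) - 1) * y₀ ^ (k - 2) = t →
      y₀ < 0 ∧
      ∀ p : ℝ × ℝ,
        fderiv ℝ (fun q : ℝ × ℝ =>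
          q.1 ^ 2 * q.2 + 2 * t * q.1 ^ 2 + q.2 ^ (k - 1) - t * q.2) p = 0 ↔
        p = (0, y₀) := by
  have hk5 : (5:ℝ) ≤ (k:ℝ) := by exact_mod_cast hk
  have hkR : (0:ℝ) < (k:ℝ) - 1 := by linarith
  have hodd : Odd (k - 2) := Nat.Odd.sub_even (by omega) hko (by decide)
  have hk2 : k - 2 ≠ 0 := by omega
  have hcast : ((k - 1 : ℕ) : ℝ) = (k:ℝ) - 1 := by
    rw [Nat.cast_sub (by omega)]; simp
  have hmono := Odd.strictMono_pow (R := ℝ) hodd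
  -- the derivative computation
  have hfd : ∀ p : ℝ × ℝ, ∀ v : ℝ × ℝ,
      fderiv ℝ (fun q : ℝ × ℝ =>
        q.1 ^ 2 * q.2 + 2 * t * q.1 ^ 2 + q.2 ^ (k - 1) - t * q.2) p v
      = (2 * p.1 * p.2 + 4 * t * p.1) * v.1
        + (p.1 ^ 2 + ((k:ℝ) - 1) * p.2 ^ (k - 2) - t) * v.2 := by
    intro p v
    have h1 : HasFDerivAt (fun q : ℝ × ℝ => q.1)
        (ContinuousLinearMap.fst ℝ ℝ ℝ) p := hasFDerivAt_fst
    have h2 : HasFDerivAt (fun q : ℝ × ℝ => q.2)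
        (ContinuousLinearMap.snd ℝ ℝ ℝ) p := hasFDerivAt_snd
    have hp1 : HasFDerivAt (fun q : ℝ × ℝ => q.1 ^ 2)
        ((((2:ℕ):ℝ) * p.1 ^ (2 - 1)) • ContinuousLinearMap.fst ℝ ℝ ℝ) p :=
      (hasDerivAt_pow 2 p.1).comp_hasFDerivAt p h1
    have hp2 : HasFDerivAt (fun q : ℝ × ℝ => q.2 ^ (k - 1))
        ((((k - 1:ℕ):ℝ) * p.2 ^ (k - 1 - 1)) • ContinuousLinearMap.snd ℝ ℝ ℝ) p :=
      (hasDerivAt_pow (k - 1) p.2).comp_hasFDerivAt p h2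
    have H := (((hp1.mul h2).add (hp1.const_mul (2 * t))).add hp2).sub
      (h2.const_mul t)
    rw [(show HasFDerivAt (fun q : ℝ × ℝ => q.1 ^ 2 * q.2 + 2 * t * q.1 ^ 2 + q.2 ^ (k - 1) - t * q.2) _ p from H).fderiv]
    simp only [ContinuousLinearMap.sub_apply, ContinuousLinearMap.add_apply,
      ContinuousLinearMap.smul_apply, ContinuousLinearMap.coe_fst',
      ContinuousLinearMap.coe_snd', smul_eq_mul]
    have : k - 1 - 1 = k - 2 := by omega
    rw [this, hcast]
    ring
  -- existence and uniqueness of y₀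
  have hex : ∃! y₀ : ℝ, ((k : ℝ) - 1) * y₀ ^ (k - 2) = t := by
    refine ⟨-((-t / ((k:ℝ) - 1)) ^ (((k - 2 : ℕ) : ℝ))⁻¹ ), ?_, ?_⟩
    · have hpos : (0:ℝ) ≤ -t / ((k:ℝ) - 1) := by
        apply div_nonneg (by linarith) hkR.le
      show ((k : ℝ) - 1) * (-((-t / ((k:ℝ) - 1)) ^ (((k - 2 : ℕ) : ℝ))⁻¹)) ^ (k - 2) = t
      rw [hodd.neg_pow, Real.rpow_inv_natCast_pow hpos hk2]
      field_simp
    · intro y hy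
      apply hmono.injective
      have hy0 : ((k : ℝ) - 1) * (-((-t / ((k:ℝ) - 1)) ^ (((k - 2 : ℕ) : ℝ))⁻¹)) ^ (k - 2) = t := by
        have hpos : (0:ℝ) ≤ -t / ((k:ℝ) - 1) := by
          apply div_nonneg (by linarith) hkR.le
        rw [hodd.neg_pow, Real.rpow_inv_natCast_pow hpos hk2]
        field_simp
      have := hy.trans hy0.symm
      exact mul_left_cancel₀ (by linarith) this
  refine ⟨hex, ?_⟩
  intro y₀ hy₀
  have hy₀neg : y₀ < 0 := by
    by_contra h
    push_neg at h
    have : (0:ℝ) ≤ ((k : ℝ) - 1) * y₀ ^ (k - 2) :=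
      mul_nonneg hkR.le (pow_nonneg h _)
    linarith [hy₀ ▸ this]
  refine ⟨hy₀neg, ?_⟩
  intro p
  constructor
  · intro h
    have e1 := hfd p (1, 0)
    have e2 := hfd p (0, 1)
    rw [h] at e1 e2
    simp at e1 e2
    -- e1 : 2*p.1*p.2 + 4*t*p.1 = 0, e2 : p.1^2 + ((k:ℝ)-1)*p.2^(k-2) - t = 0
    have hx : p.1 = 0 := by
      rcases mul_eq_zero.1 (show (2 * p.1) * (p.2 + 2 * t) = 0 by linarith [e1]; ) with h' | h'
      · linarith [h']
      · exfalso
        have hp2 : p.2 = -2 * t := by linarith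
        have hpow : (0:ℝ) < p.2 ^ (k - 2) := by
          apply pow_pos; rw [hp2]; linarith
        nlinarith [sq_nonneg p.1, mul_pos hkR hpow]
    have hy : p.2 = y₀ := by
      apply hmono.injective
      have h1 : ((k : ℝ) - 1) * p.2 ^ (k - 2) = t := by
        rw [hx] at e2; simpa using by linarith [e2]
      exact mul_left_cancel₀ (by linarith) (h1.trans hy₀.symm)
    exact Prod.ext hx hy
  · intro h
    apply ContinuousLinearMap.ext
    intro v
    rw [hfd p v, h]
    simp [hy₀]
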